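/- arXiv:2008.03885 — 6 statements merged into one kernel-verified Lean document; each statement's English description precedes it below -/
import Mathlib

section
/- Let ω ∈ ℝ, θ ∈ ℝ, ξ = sin²(θ/2), and θ̄ = θ + π. Define the red-point partial sweep R on u : ℤ → ℂ by (R u)(j) = u(j) if j is even, and (R u)(j) = (1−ω)u(j) + (ω/2)(u(j−1) + u(j+1)) if j is odd. Then for all a, b ∈ ℂ, R(a·φ_θ + b·φ_θ̄) = a′·φ_θ + b′·φ_θ̄, where φ_θ(j) = exp(iθj) and the coefficient vector satisfies [a′; b′] = S^R(θ)·[a; b] with the 2×2 matrix S^R(θ) = I − ω·[[1, −1], [−1, 1]]·diag(ξ, 1−ξ). In particular R leaves the subspace 𝔼_θ = span{φ_θ, φ_θ̄} invariant. -/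
open Matrix in
/-- The red partial sweep (relaxing odd points) of damped red-black relaxation for the 1D
Poisson stencil leaves `𝔼_θ = span{φ_θ, φ_{θ+π}}` invariant, acting on coefficient vectors
by the matrix symbol `S^R(θ) = I − ω·[[1,−1],[−1,1]]·diag(ξ, 1−ξ)`, `ξ = sin²(θ/2)`. -/
theorem red_sweep_1d_symbol (ω θ : ℝ)
    (ξ : ℝ) (hξ : ξ = (Real.sin (θ / 2)) ^ 2)
    (φ φbar : ℤ → ℂ)
    (hφ : ∀ j : ℤ, φ j = Complex.exp (Complex.I * θ * j))
    (hφbar : ∀ j : ℤ, φbar j = Complex.exp (Complex.I * (θ + Real.pi) * j))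
    (R : (ℤ → ℂ) → (ℤ → ℂ))
    (hR : ∀ (u : ℤ → ℂ) (j : ℤ),
      R u j = if Odd j then
          (1 - (ω : ℂ)) * u j + ((ω : ℂ) / 2) * (u (j - 1) + u (j + 1))
        else u j)
    (SR : Matrix (Fin 2) (Fin 2) ℂ)
    (hSR : SR = 1 - (ω : ℂ) •
      (!![1, -1; -1, 1] * !![(ξ : ℂ), 0; 0, 1 - (ξ : ℂ)])) :
    ∀ a b : ℂ,
      R (fun j => a * φ j + b * φbar j)
        = fun j => (SR.mulVec ![a, b] 0) * φ j + (SR.mulVec ![a, b] 1) * φbar j := by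
  intro a b
  funext j
  have hbar : ∀ k : ℤ, φbar k = (-1 : ℂ) ^ k * φ k := by
    intro k
    rw [hφbar, hφ]
    have h : Complex.I * (θ + Real.pi) * k
        = (k : ℂ) * (Real.pi * Complex.I) + Complex.I * θ * k := by ring
    rw [h, Complex.exp_add, Complex.exp_int_mul, Complex.exp_pi_mul_I]
  have hSR0 : SR.mulVec ![a, b] 0 = (1 - ω * ξ) * a + (ω * (1 - ξ)) * b := by
    simp [hSR, Matrix.mulVec, dotProduct, Fin.sum_univ_two, Matrix.one_apply]
    ring
  have hSR1 : SR.mulVec ![a, b] 1 = (ω * ξ) * a + (1 - ω * (1 - ξ)) * b := by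
    simp [hSR, Matrix.mulVec, dotProduct, Fin.sum_univ_two, Matrix.one_apply]
  rw [hR]
  by_cases hj : Odd j
  · rw [if_pos hj]
    have he1 : Even (j - 1) := Odd.sub_odd hj odd_one
    have he2 : Even (j + 1) := Odd.add_one hj
    have h1 : φbar (j - 1) = φ (j - 1) := by rw [hbar, he1.neg_one_zpow, one_mul]
    have h2 : φbar (j + 1) = φ (j + 1) := by rw [hbar, he2.neg_one_zpow, one_mul]
    have hb : φbar j = -φ j := by rw [hbar, hj.neg_one_zpow]; ring
    have hsum : φ (j - 1) + φ (j + 1) = 2 * (Real.cos θ : ℂ) * φ j := by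
      rw [hφ, hφ, hφ]
      have e1 : Complex.I * θ * ((j : ℤ) - 1 : ℤ)
          = (-(θ : ℂ)) * Complex.I + Complex.I * θ * j := by push_cast; ring
      have e2 : Complex.I * θ * ((j : ℤ) + 1 : ℤ)
          = ((θ : ℂ)) * Complex.I + Complex.I * θ * j := by push_cast; ring
      rw [e1, e2, Complex.exp_add, Complex.exp_add, Complex.exp_mul_I, Complex.exp_mul_I,
        Complex.cos_neg, Complex.sin_neg]
      rw [show ((Real.cos θ : ℝ) : ℂ) = Complex.cos θ from (Complex.ofReal_cos θ)]
      ring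
    have hcos : (Real.cos θ : ℂ) = 1 - 2 * (ξ : ℂ) := by
      have h : Real.cos θ = 1 - 2 * ξ := by
        rw [hξ]
        have h2 := Real.cos_sq (θ / 2)
        rw [show 2 * (θ / 2) = θ by ring] at h2
        nlinarith [Real.sin_sq_add_cos_sq (θ / 2)]
      exact_mod_cast h
    rw [hSR0, hSR1, hb, h1, h2]
    linear_combination ((ω : ℂ) / 2) * (a + b) * hsum
      + (ω : ℂ) * (a + b) * (φ j) * hcos
  · rw [if_neg hj]
    have he : Even j := Int.not_odd_iff_even.mp hj
    have hb : φbar j = φ j := by rw [hbar, he.neg_one_zpow, one_mul]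
    rw [hSR0, hSR1, hb]
    ring
end

section
/- Let ω ∈ ℝ, θ ∈ ℝ, ξ = sin²(θ/2), and θ̄ = θ + π. Define the black-point partial sweep B on u : ℤ → ℂ by (B u)(j) = u(j) if j is odd, and (B u)(j) = (1−ω)u(j) + (ω/2)(u(j−1) + u(j+1)) if j is even. Then for all a, b ∈ ℂ, B(a·φ_θ + b·φ_θ̄) = a′·φ_θ + b′·φ_θ̄, where φ_θ(j) = exp(iθj) and [a′; b′] = S^B(θ)·[a; b] with S^B(θ) = I − ω·[[1, 1], [1, 1]]·diag(ξ, 1−ξ). -/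
open Matrix in
/-- The black partial sweep (relaxing even points) of damped red-black relaxation for the 1D
Poisson stencil leaves `𝔼_θ = span{φ_θ, φ_{θ+π}}` invariant, acting on coefficient vectors
by the matrix symbol `S^B(θ) = I − ω·[[1,1],[1,1]]·diag(ξ, 1−ξ)`, `ξ = sin²(θ/2)`. -/
theorem black_sweep_1d_symbol (ω θ : ℝ)
    (ξ : ℝ) (hξ : ξ = (Real.sin (θ / 2)) ^ 2)
    (φ φbar : ℤ → ℂ)
    (hφ : ∀ j : ℤ, φ j = Complex.exp (Complex.I * θ * j))
    (hφbar : ∀ j : ℤ, φbar j = Complex.exp (Complex.I * (θ + Real.pi) * j))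
    (B : (ℤ → ℂ) → (ℤ → ℂ))
    (hB : ∀ (u : ℤ → ℂ) (j : ℤ),
      B u j = if Even j then
          (1 - (ω : ℂ)) * u j + ((ω : ℂ) / 2) * (u (j - 1) + u (j + 1))
        else u j)
    (SB : Matrix (Fin 2) (Fin 2) ℂ)
    (hSB : SB = 1 - (ω : ℂ) •
      (!![1, 1; 1, 1] * !![(ξ : ℂ), 0; 0, 1 - (ξ : ℂ)])) :
    ∀ a b : ℂ,
      B (fun j => a * φ j + b * φbar j)
        = fun j => (SB.mulVec ![a, b] 0) * φ j + (SB.mulVec ![a, b] 1) * φbar j := by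
  intro a b
  -- exp sum lemma
  have keyexp : ∀ (α : ℝ) (j : ℤ),
      Complex.exp (Complex.I * α * ((j : ℂ) - 1)) +
        Complex.exp (Complex.I * α * ((j : ℂ) + 1))
        = 2 * (Real.cos α : ℂ) * Complex.exp (Complex.I * α * j) := by
    intro α j
    rw [show Complex.I * α * ((j : ℂ) - 1) = Complex.I * α * j + (-α : ℂ) * Complex.I by ring,
        show Complex.I * α * ((j : ℂ) + 1) = Complex.I * α * j + (α : ℂ) * Complex.I by ring,
        Complex.exp_add, Complex.exp_add, Complex.exp_mul_I, Complex.exp_mul_I,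
        Complex.cos_neg, Complex.sin_neg]
    rw [show ((Real.cos α : ℂ)) = Complex.cos (α : ℂ) by simp]
    ring
  have hcos : Complex.cos (θ : ℂ) = 1 - 2 * (ξ : ℂ) := by
    have h : Real.cos θ = 1 - 2 * ξ := by
      rw [hξ, show θ = 2 * (θ / 2) by ring, Real.cos_two_mul, Real.cos_sq']
      ring
    rw [← Complex.ofReal_cos, h]; push_cast; ring
  have hcosbar : Complex.cos ((θ : ℂ) + (Real.pi : ℂ)) = 2 * (ξ : ℂ) - 1 := by
    have h : Real.cos (θ + Real.pi) = -Real.cos θ := Real.cos_add_pi θ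
    have := congrArg (Complex.ofReal) h
    push_cast at this
    rw [this, hcos]; ring
  have hsumφ : ∀ j : ℤ, φ (j - 1) + φ (j + 1) = 2 * (1 - 2 * (ξ : ℂ)) * φ j := by
    intro j
    rw [hφ, hφ, hφ]
    have := keyexp θ j
    push_cast at this ⊢
    rw [this, hcos]
  have hsumφbar : ∀ j : ℤ, φbar (j - 1) + φbar (j + 1) = 2 * (2 * (ξ : ℂ) - 1) * φbar j := by
    intro j
    rw [hφbar, hφbar, hφbar]
    have := keyexp (θ + Real.pi) j
    push_cast at this ⊢
    rw [this, hcosbar]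
  have hbarφ : ∀ j : ℤ, φbar j = (-1 : ℂ) ^ j * φ j := by
    intro j
    rw [hφ, hφbar]
    rw [show Complex.I * ((θ : ℂ) + (Real.pi : ℂ)) * (j : ℂ)
          = Complex.I * θ * j + (j : ℂ) * ((Real.pi : ℂ) * Complex.I) by ring,
        Complex.exp_add, Complex.exp_int_mul, Complex.exp_pi_mul_I]
    ring
  have ha' : SB.mulVec ![a, b] 0 = a - (ω : ℂ) * ((ξ : ℂ) * a + (1 - (ξ : ℂ)) * b) := by
    simp [hSB, Matrix.mulVec, dotProduct, Fin.sum_univ_two, Matrix.mul_apply,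
      Matrix.one_apply]
    ring
  have hb' : SB.mulVec ![a, b] 1 = b - (ω : ℂ) * ((ξ : ℂ) * a + (1 - (ξ : ℂ)) * b) := by
    simp [hSB, Matrix.mulVec, dotProduct, Fin.sum_univ_two, Matrix.mul_apply,
      Matrix.one_apply]
    ring
  funext j
  rw [hB, ha', hb']
  by_cases hj : Even j
  · simp only [if_pos hj]
    have hb1 : φbar j = φ j := by
      rw [hbarφ j, Even.neg_one_zpow hj, one_mul]
    rw [hb1]
    have h1 := hsumφ j
    have h2 := hsumφbar j
    have h2' : φbar (j - 1) + φbar (j + 1) = 2 * (2 * (ξ : ℂ) - 1) * φ j := by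
      rw [h2, hb1]
    calc (1 - (ω : ℂ)) * (a * φ j + b * φ j) +
          ((ω : ℂ) / 2) * (a * φ (j - 1) + b * φbar (j - 1) + (a * φ (j + 1) + b * φbar (j + 1)))
        = (1 - (ω : ℂ)) * (a * φ j + b * φ j) +
          ((ω : ℂ) / 2) * (a * (φ (j - 1) + φ (j + 1)) + b * (φbar (j - 1) + φbar (j + 1))) := by
            ring
      _ = _ := by rw [h1, h2']; ring
  · simp only [if_neg hj]
    have hodd : Odd j := Int.not_even_iff_odd.mp hj
    have hb1 : φbar j = -φ j := by
      rw [hbarφ j, Odd.neg_one_zpow hodd]; ring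
    rw [hb1]; ring
end

section
/- For every ξ ∈ ℝ, with ω = 1: S^R(ξ) · K(ξ) = 0, where S^R(ξ) = I₂ − [[1, −1], [−1, 1]]·diag(ξ, 1−ξ) and K(ξ) = [[ξ, −(1−ξ)], [−ξ, 1−ξ]]. That is, one undamped red partial sweep after coarse-grid correction annihilates the error on every invariant Fourier subspace, so the two-level cycle with ω = 1 and post-smoothing is a direct solver for the 1D Poisson equation. -/
open Matrix in
/-- With `ω = 1`, `S^R(ξ) · K(ξ) = 0`: one undamped red partial sweep after coarse-grid
correction annihilates the error on every invariant Fourier subspace, so the two-level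
cycle with `ω = 1` and post-smoothing is a direct solver for the 1D Poisson equation. -/
theorem red_sweep_after_correction_annihilates (ξ : ℝ) :
    ((1 : Matrix (Fin 2) (Fin 2) ℝ) - !![1, -1; -1, 1] * !![ξ, 0; 0, 1 - ξ])
        * !![ξ, -(1 - ξ); -ξ, 1 - ξ] = 0 := by
  ext i j
  fin_cases i <;> fin_cases j <;> simp [Matrix.mul_apply, Fin.sum_univ_two, Matrix.one_apply] <;> ring
end

section
/- Let ξ ∈ ℝ and ω = 1. Then the full red-black sweep matrix symbol factors as S^B(ξ)·S^R(ξ) = (1−2ξ)·[1−ξ; −ξ]·[1, 1], where S^R(ξ) = I₂ − [[1, −1], [−1, 1]]·diag(ξ, 1−ξ) and S^B(ξ) = I₂ − [[1, 1], [1, 1]]·diag(ξ, 1−ξ). Consequently S^B(ξ)S^R(ξ) has trace (1−2ξ)², determinant 0, and its eigenvalues are 0 and (1−2ξ)². -/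
open Matrix Polynomial in
/-- With `ω = 1`, the full red-black sweep symbol factors as
`S^B(ξ)·S^R(ξ) = (1−2ξ)·[1−ξ; −ξ]·[1, 1]`; consequently it has trace `(1−2ξ)²`,
determinant `0`, and eigenvalues `0` and `(1−2ξ)²` (its characteristic polynomial is
`X·(X − (1−2ξ)²)`). -/
theorem full_sweep_factorization (ξ : ℝ)
    (SR SB : Matrix (Fin 2) (Fin 2) ℝ)
    (hSR : SR = 1 - !![1, -1; -1, 1] * !![ξ, 0; 0, 1 - ξ])
    (hSB : SB = 1 - !![1, 1; 1, 1] * !![ξ, 0; 0, 1 - ξ]) :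
    SB * SR = (1 - 2 * ξ) • (!![1 - ξ; -ξ] * !![(1 : ℝ), 1]) ∧
    Matrix.trace (SB * SR) = (1 - 2 * ξ) ^ 2 ∧
    (SB * SR).det = 0 ∧
    (SB * SR).charpoly = X * (X - C ((1 - 2 * ξ) ^ 2)) := by
  subst hSR hSB
  have h : (1 - !![1, 1; 1, 1] * !![ξ, 0; 0, 1 - ξ]) *
      (1 - !![(1:ℝ), -1; -1, 1] * !![ξ, 0; 0, 1 - ξ]) =
      (1 - 2 * ξ) • (!![1 - ξ; -ξ] * !![(1 : ℝ), 1]) := by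
    ext i j
    fin_cases i <;> fin_cases j <;>
      simp [Matrix.mul_apply, Fin.sum_univ_two, Matrix.one_apply] <;> ring
  refine ⟨h, ?_, ?_, ?_⟩
  · rw [h]
    simp [Matrix.trace_fin_two, Matrix.mul_apply, Fin.sum_univ_succ]
    ring
  · rw [h]
    simp [Matrix.det_fin_two, Matrix.mul_apply, Fin.sum_univ_succ]
  · rw [h, Matrix.charpoly, Matrix.det_fin_two]
    simp [Matrix.charmatrix_apply, Matrix.mul_apply, Fin.sum_univ_succ]
    have h2 : (C (2:ℝ)) = 2 := by rw [show (2:ℝ) = 1 + 1 by norm_num]; simp; norm_num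
    rw [h2]; ring
end

section
/- Let ω ∈ ℝ, θ = (θ₁, θ₂) ∈ ℝ², ξ = (1/2)(sin²(θ₁/2) + sin²(θ₂/2)), and θ̄ = (θ₁+π, θ₂+π). Define the two-dimensional red partial sweep R on u : ℤ² → ℂ by (R u)(j₁,j₂) = u(j₁,j₂) if j₁+j₂ is even, and (R u)(j₁,j₂) = (1−ω)u(j₁,j₂) + (ω/4)(u(j₁−1,j₂) + u(j₁+1,j₂) + u(j₁,j₂−1) + u(j₁,j₂+1)) if j₁+j₂ is odd. Then for all a, b ∈ ℂ, R(a·φ_θ + b·φ_θ̄) = a′·φ_θ + b′·φ_θ̄ with [a′; b′] = (I₂ − ω·[[1, −1], [−1, 1]]·diag(ξ, 1−ξ))·[a; b]. In particular, the two-dimensional red partial-sweep symbol has the exact same form as in one dimension, with ξ_θ redefined as (1/2)(sin²(θ₁/2)+sin²(θ₂/2)). -/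
private lemma two_cos' (x : ℝ) :
    Complex.exp (Complex.I * x) + Complex.exp (-(Complex.I * x)) = 2 * Real.cos x := by
  rw [show Complex.I * (x:ℂ) = (x:ℂ) * Complex.I by ring, Complex.exp_mul_I,
    show -((x:ℂ) * Complex.I) = (-x:ℂ) * Complex.I by ring, Complex.exp_mul_I]
  simp [Complex.cos_neg, Complex.sin_neg, Complex.ofReal_cos]
  ring

private lemma cos_half' (x : ℝ) : Real.cos x = 1 - 2 * Real.sin (x/2) ^ 2 := by
  have h1 := Real.cos_two_mul' (x/2)
  have h2 := Real.sin_sq_add_cos_sq (x/2)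
  rw [show 2 * (x/2) = x by ring] at h1
  nlinarith [h1, h2]

open Matrix in
/-- The 2D red partial sweep (relaxing points with `j₁+j₂` odd) of damped red-black
relaxation for the five-point Poisson stencil leaves `𝔼_θ = span{φ_θ, φ_θ̄}` invariant
(`θ̄ = (θ₁+π, θ₂+π)`), with the same matrix symbol
`I − ω·[[1,−1],[−1,1]]·diag(ξ, 1−ξ)` as in 1D, where
`ξ = (1/2)(sin²(θ₁/2)+sin²(θ₂/2))`. -/
theorem red_sweep_2d_symbol (ω θ₁ θ₂ : ℝ)
    (ξ : ℝ) (hξ : ξ = (1 / 2) * ((Real.sin (θ₁ / 2)) ^ 2 + (Real.sin (θ₂ / 2)) ^ 2))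
    (φ φbar : ℤ × ℤ → ℂ)
    (hφ : ∀ j : ℤ × ℤ, φ j = Complex.exp (Complex.I * (θ₁ * j.1 + θ₂ * j.2)))
    (hφbar : ∀ j : ℤ × ℤ, φbar j =
      Complex.exp (Complex.I * ((θ₁ + Real.pi) * j.1 + (θ₂ + Real.pi) * j.2)))
    (R : (ℤ × ℤ → ℂ) → (ℤ × ℤ → ℂ))
    (hR : ∀ (u : ℤ × ℤ → ℂ) (j₁ j₂ : ℤ),
      R u (j₁, j₂) = if Odd (j₁ + j₂) then
          (1 - (ω : ℂ)) * u (j₁, j₂) + ((ω : ℂ) / 4) *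
            (u (j₁ - 1, j₂) + u (j₁ + 1, j₂) + u (j₁, j₂ - 1) + u (j₁, j₂ + 1))
        else u (j₁, j₂))
    (SR : Matrix (Fin 2) (Fin 2) ℂ)
    (hSR : SR = 1 - (ω : ℂ) •
      (!![1, -1; -1, 1] * !![(ξ : ℂ), 0; 0, 1 - (ξ : ℂ)])) :
    ∀ a b : ℂ,
      R (fun j => a * φ j + b * φbar j)
        = fun j => (SR.mulVec ![a, b] 0) * φ j + (SR.mulVec ![a, b] 1) * φbar j := by
  intro a b
  have ha' : SR.mulVec ![a, b] 0 = (1 - ω*ξ)*a + ω*(1-ξ)*b := by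
    subst hSR
    simp [Matrix.mulVec, dotProduct, Fin.sum_univ_two, Matrix.mul_apply,
      Matrix.one_apply, Matrix.sub_apply, Matrix.smul_apply]
    ring
  have hb' : SR.mulVec ![a, b] 1 = ω*ξ*a + (1 - ω*(1-ξ))*b := by
    subst hSR
    simp [Matrix.mulVec, dotProduct, Fin.sum_univ_two, Matrix.mul_apply,
      Matrix.one_apply, Matrix.sub_apply, Matrix.smul_apply]
  -- cosine identities
  have hcosR : Real.cos θ₁ + Real.cos θ₂ = 2 - 4*ξ := by
    rw [cos_half' θ₁, cos_half' θ₂, hξ]; ring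
  have hcos : ((Real.cos θ₁ : ℝ) : ℂ) + ((Real.cos θ₂ : ℝ) : ℂ) = 2 - 4*(ξ:ℂ) := by
    exact_mod_cast congrArg (fun t : ℝ => (t : ℂ)) hcosR
  have hs1 := two_cos' θ₁
  have hs2 := two_cos' θ₂
  funext j
  obtain ⟨j₁, j₂⟩ := j
  rw [hR, ha', hb']
  simp only [hφ, hφbar]
  push_cast
  -- rewrite all exponential arguments relative to the base frequency
  rw [show Complex.I * ((θ₁:ℂ) * ((j₁:ℂ) - 1) + (θ₂:ℂ) * (j₂:ℂ))
        = Complex.I * ((θ₁:ℂ) * (j₁:ℂ) + (θ₂:ℂ) * (j₂:ℂ)) + -(Complex.I * (θ₁:ℂ)) by ring,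
      show Complex.I * ((θ₁:ℂ) * ((j₁:ℂ) + 1) + (θ₂:ℂ) * (j₂:ℂ))
        = Complex.I * ((θ₁:ℂ) * (j₁:ℂ) + (θ₂:ℂ) * (j₂:ℂ)) + Complex.I * (θ₁:ℂ) by ring,
      show Complex.I * ((θ₁:ℂ) * (j₁:ℂ) + (θ₂:ℂ) * ((j₂:ℂ) - 1))
        = Complex.I * ((θ₁:ℂ) * (j₁:ℂ) + (θ₂:ℂ) * (j₂:ℂ)) + -(Complex.I * (θ₂:ℂ)) by ring,
      show Complex.I * ((θ₁:ℂ) * (j₁:ℂ) + (θ₂:ℂ) * ((j₂:ℂ) + 1))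
        = Complex.I * ((θ₁:ℂ) * (j₁:ℂ) + (θ₂:ℂ) * (j₂:ℂ)) + Complex.I * (θ₂:ℂ) by ring,
      show Complex.I * (((θ₁:ℂ) + (Real.pi:ℂ)) * ((j₁:ℂ) - 1) + ((θ₂:ℂ) + (Real.pi:ℂ)) * (j₂:ℂ))
        = ((j₁ + j₂ : ℤ) : ℂ) * ((Real.pi:ℂ) * Complex.I)
          + (Complex.I * ((θ₁:ℂ) * (j₁:ℂ) + (θ₂:ℂ) * (j₂:ℂ))
             + (-(Complex.I * (θ₁:ℂ)) + -((Real.pi:ℂ) * Complex.I))) by push_cast; ring,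
      show Complex.I * (((θ₁:ℂ) + (Real.pi:ℂ)) * ((j₁:ℂ) + 1) + ((θ₂:ℂ) + (Real.pi:ℂ)) * (j₂:ℂ))
        = ((j₁ + j₂ : ℤ) : ℂ) * ((Real.pi:ℂ) * Complex.I)
          + (Complex.I * ((θ₁:ℂ) * (j₁:ℂ) + (θ₂:ℂ) * (j₂:ℂ))
             + (Complex.I * (θ₁:ℂ) + (Real.pi:ℂ) * Complex.I)) by push_cast; ring,
      show Complex.I * (((θ₁:ℂ) + (Real.pi:ℂ)) * (j₁:ℂ) + ((θ₂:ℂ) + (Real.pi:ℂ)) * ((j₂:ℂ) - 1))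
        = ((j₁ + j₂ : ℤ) : ℂ) * ((Real.pi:ℂ) * Complex.I)
          + (Complex.I * ((θ₁:ℂ) * (j₁:ℂ) + (θ₂:ℂ) * (j₂:ℂ))
             + (-(Complex.I * (θ₂:ℂ)) + -((Real.pi:ℂ) * Complex.I))) by push_cast; ring,
      show Complex.I * (((θ₁:ℂ) + (Real.pi:ℂ)) * (j₁:ℂ) + ((θ₂:ℂ) + (Real.pi:ℂ)) * ((j₂:ℂ) + 1))
        = ((j₁ + j₂ : ℤ) : ℂ) * ((Real.pi:ℂ) * Complex.I)
          + (Complex.I * ((θ₁:ℂ) * (j₁:ℂ) + (θ₂:ℂ) * (j₂:ℂ))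
             + (Complex.I * (θ₂:ℂ) + (Real.pi:ℂ) * Complex.I)) by push_cast; ring,
      show Complex.I * (((θ₁:ℂ) + (Real.pi:ℂ)) * (j₁:ℂ) + ((θ₂:ℂ) + (Real.pi:ℂ)) * (j₂:ℂ))
        = ((j₁ + j₂ : ℤ) : ℂ) * ((Real.pi:ℂ) * Complex.I)
          + Complex.I * ((θ₁:ℂ) * (j₁:ℂ) + (θ₂:ℂ) * (j₂:ℂ)) by push_cast; ring]
  simp only [Complex.exp_add, Complex.exp_int_mul, Complex.exp_pi_mul_I, Complex.exp_neg]
  rw [Complex.exp_neg] at hs1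
  rw [Complex.exp_neg] at hs2
  set E := Complex.exp (Complex.I * ((θ₁:ℂ) * (j₁:ℂ) + (θ₂:ℂ) * (j₂:ℂ))) with hE
  set x₁ := Complex.exp (Complex.I * (θ₁:ℂ)) with hx₁
  set x₂ := Complex.exp (Complex.I * (θ₂:ℂ)) with hx₂
  by_cases hodd : Odd (j₁ + j₂)
  · rw [if_pos hodd, hodd.neg_one_zpow]
    linear_combination ((ω:ℂ)/4*(a+b)*E) * hs1 + ((ω:ℂ)/4*(a+b)*E) * hs2
      + ((ω:ℂ)/2*(a+b)*E) * hcos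
  · rw [if_neg hodd, (Int.not_odd_iff_even.mp hodd).neg_one_zpow]
    ring
end

section
/- Let ω ∈ ℝ, θ = (θ₁, θ₂) ∈ ℝ², ξ = (1/2)(sin²(θ₁/2) + sin²(θ₂/2)), and θ̄ = (θ₁+π, θ₂+π). Define the two-dimensional black partial sweep B on u : ℤ² → ℂ by (B u)(j₁,j₂) = u(j₁,j₂) if j₁+j₂ is odd, and (B u)(j₁,j₂) = (1−ω)u(j₁,j₂) + (ω/4)(u(j₁−1,j₂) + u(j₁+1,j₂) + u(j₁,j₂−1) + u(j₁,j₂+1)) if j₁+j₂ is even. Then for all a, b ∈ ℂ, B(a·φ_θ + b·φ_θ̄) = a′·φ_θ + b′·φ_θ̄ with [a′; b′] = (I₂ − ω·[[1, 1], [1, 1]]·diag(ξ, 1−ξ))·[a; b]. -/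
lemma exp_split (θ₁ θ₂ : ℝ) (j₁ j₂ : ℤ) :
    Complex.exp (Complex.I * (θ₁ * j₁ + θ₂ * j₂)) =
      Complex.exp (Complex.I * θ₁) ^ j₁ * Complex.exp (Complex.I * θ₂) ^ j₂ := by
  rw [← Complex.exp_int_mul, ← Complex.exp_int_mul, ← Complex.exp_add]
  ring_nf

lemma neg_base (θ : ℝ) :
    Complex.exp (Complex.I * (θ + Real.pi)) = -Complex.exp (Complex.I * θ) := by
  rw [show Complex.I * ((θ : ℂ) + (Real.pi : ℂ)) = Complex.I * θ + Real.pi * Complex.I by ring,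
    Complex.exp_add, Complex.exp_pi_mul_I]
  ring

lemma cos_key (θ : ℝ) :
    Complex.exp (Complex.I * θ) + (Complex.exp (Complex.I * θ))⁻¹ =
      2 - 4 * ((Real.sin (θ / 2) : ℂ)) ^ 2 := by
  rw [← Complex.exp_neg]
  have h1 : Complex.exp (Complex.I * θ) + Complex.exp (-(Complex.I * θ)) =
      2 * Complex.cos θ := by
    rw [Complex.cos]
    ring_nf
  rw [h1, ← Complex.ofReal_cos]
  have h2 : Real.cos θ = 1 - 2 * Real.sin (θ / 2) ^ 2 := by
    have h3 : Real.cos (2 * (θ / 2)) = 2 * Real.cos (θ / 2) ^ 2 - 1 := Real.cos_two_mul _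
    have h4 := Real.sin_sq_add_cos_sq (θ / 2)
    rw [show 2 * (θ / 2) = θ by ring] at h3
    linarith
  rw [h2]
  push_cast
  ring




open Matrix in
/-- The 2D black partial sweep (relaxing points with `j₁+j₂` even) of damped red-black
relaxation for the five-point Poisson stencil leaves `𝔼_θ = span{φ_θ, φ_θ̄}` invariant
(`θ̄ = (θ₁+π, θ₂+π)`), with matrix symbol
`I − ω·[[1,1],[1,1]]·diag(ξ, 1−ξ)`, where
`ξ = (1/2)(sin²(θ₁/2)+sin²(θ₂/2))`. -/
theorem black_sweep_2d_symbol (ω θ₁ θ₂ : ℝ)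
    (ξ : ℝ) (hξ : ξ = (1 / 2) * ((Real.sin (θ₁ / 2)) ^ 2 + (Real.sin (θ₂ / 2)) ^ 2))
    (φ φbar : ℤ × ℤ → ℂ)
    (hφ : ∀ j : ℤ × ℤ, φ j = Complex.exp (Complex.I * (θ₁ * j.1 + θ₂ * j.2)))
    (hφbar : ∀ j : ℤ × ℤ, φbar j =
      Complex.exp (Complex.I * ((θ₁ + Real.pi) * j.1 + (θ₂ + Real.pi) * j.2)))
    (B : (ℤ × ℤ → ℂ) → (ℤ × ℤ → ℂ))
    (hB : ∀ (u : ℤ × ℤ → ℂ) (j₁ j₂ : ℤ),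
      B u (j₁, j₂) = if Even (j₁ + j₂) then
          (1 - (ω : ℂ)) * u (j₁, j₂) + ((ω : ℂ) / 4) *
            (u (j₁ - 1, j₂) + u (j₁ + 1, j₂) + u (j₁, j₂ - 1) + u (j₁, j₂ + 1))
        else u (j₁, j₂))
    (SB : Matrix (Fin 2) (Fin 2) ℂ)
    (hSB : SB = 1 - (ω : ℂ) •
      (!![1, 1; 1, 1] * !![(ξ : ℂ), 0; 0, 1 - (ξ : ℂ)])) :
    ∀ a b : ℂ,
      B (fun j => a * φ j + b * φbar j)
        = fun j => (SB.mulVec ![a, b] 0) * φ j + (SB.mulVec ![a, b] 1) * φbar j := by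
  intro a b
  set u := Complex.exp (Complex.I * θ₁) with hu_def
  set v := Complex.exp (Complex.I * θ₂) with hv_def
  have hu0 : u ≠ 0 := Complex.exp_ne_zero _
  have hv0 : v ≠ 0 := Complex.exp_ne_zero _
  have hφs : ∀ k l : ℤ, φ (k, l) = u ^ k * v ^ l := fun k l => by
    rw [hφ]; exact exp_split θ₁ θ₂ k l
  have hφbs : ∀ k l : ℤ, φbar (k, l) = (-1 : ℂ) ^ (k + l) * (u ^ k * v ^ l) := by
    intro k l
    rw [hφbar]
    have h := exp_split (θ₁ + Real.pi) (θ₂ + Real.pi) k l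
    push_cast at h ⊢
    rw [h, neg_base θ₁, neg_base θ₂, neg_eq_neg_one_mul (Complex.exp (Complex.I * (θ₁ : ℂ))),
      neg_eq_neg_one_mul (Complex.exp (Complex.I * (θ₂ : ℂ))), mul_zpow, mul_zpow,
      zpow_add₀ (by norm_num : (-1 : ℂ) ≠ 0)]
    ring
  have hA0 : SB.mulVec ![a, b] 0 = (1 - ω * ξ) * a - ω * (1 - ξ) * b := by
    simp [hSB, Matrix.mulVec, dotProduct, Fin.sum_univ_two, Matrix.mul_apply,
      Matrix.one_apply]
    all_goals ring
  have hA1 : SB.mulVec ![a, b] 1 = -(ω * ξ) * a + (1 - ω * (1 - ξ)) * b := by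
    simp [hSB, Matrix.mulVec, dotProduct, Fin.sum_univ_two, Matrix.mul_apply,
      Matrix.one_apply]
    all_goals ring
  have hξc : (ξ : ℂ) = (1 / 2) * (((Real.sin (θ₁ / 2) : ℂ)) ^ 2 + ((Real.sin (θ₂ / 2) : ℂ)) ^ 2) := by
    rw [hξ]; push_cast; ring
  have hsum : u + u⁻¹ + (v + v⁻¹) = 4 - 8 * (ξ : ℂ) := by
    rw [hu_def, hv_def, cos_key θ₁, cos_key θ₂, hξc]; ring
  funext j
  obtain ⟨j₁, j₂⟩ := j
  rw [hB, hA0, hA1]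
  simp only [hφs, hφbs]
  split_ifs with hpar
  · have h1 : ((-1 : ℂ)) ^ (j₁ + j₂) = 1 := Even.neg_one_zpow hpar
    have h2 : ((-1 : ℂ)) ^ (j₁ - 1 + j₂) = -1 := by
      rw [show j₁ - 1 + j₂ = (j₁ + j₂) - 1 by ring]
      exact Odd.neg_one_zpow (hpar.sub_odd odd_one)
    have h3 : ((-1 : ℂ)) ^ (j₁ + 1 + j₂) = -1 := by
      rw [show j₁ + 1 + j₂ = (j₁ + j₂) + 1 by ring]
      exact Odd.neg_one_zpow (hpar.add_one)
    have h4 : ((-1 : ℂ)) ^ (j₁ + (j₂ - 1)) = -1 := by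
      rw [show j₁ + (j₂ - 1) = (j₁ + j₂) - 1 by ring]
      exact Odd.neg_one_zpow (hpar.sub_odd odd_one)
    have h5 : ((-1 : ℂ)) ^ (j₁ + (j₂ + 1)) = -1 := by
      rw [show j₁ + (j₂ + 1) = (j₁ + j₂) + 1 by ring]
      exact Odd.neg_one_zpow (hpar.add_one)
    rw [h1, h2, h3, h4, h5, zpow_sub_one₀ hu0, zpow_add_one₀ hu0,
      zpow_sub_one₀ hv0, zpow_add_one₀ hv0]
    linear_combination ((ω : ℂ) / 4 * (a - b) * (u ^ j₁ * v ^ j₂)) * hsum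
  · have h1 : ((-1 : ℂ)) ^ (j₁ + j₂) = -1 :=
      Odd.neg_one_zpow (Int.not_even_iff_odd.mp hpar)
    rw [h1]
    ring
end
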